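/- arXiv:1509.07383 — 2 statements merged into one kernel-verified Lean document; each statement's English description precedes it below -/
import Mathlib

section
/- For every integer ℓ ≥ 2, the probability that the chain avoids state 1 on the whole time window [⌈ℓ/2⌉, ℓ] is bounded by a union over the last visit to 1 before time ℓ/2: P(N_i ≥ 2 for every integer i with ⌈ℓ/2⌉ ≤ i ≤ ℓ) ≤ ⌈ℓ/2⌉ · P(γ > ⌊ℓ/2⌋). -/
open MeasureTheory
open scoped ENNReal Classical

/-- The transition probabilities `p(i,j) = (i+j-1 choose i) * m^(i+1)/(m+1)^(i+j)` of the
local-time Markov chain of the `m`-biased random walk. -/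
noncomputable def ptrans (m : ℝ) (i j : ℕ) : ℝ :=
  ((i + j - 1).choose i : ℝ) * m ^ (i + 1) / (m + 1) ^ (i + j)

/-- `μ` is (the law of) the Markov chain with transition probabilities `p(i,j)`
started at `1`, expressed through its finite-dimensional (cylinder) distributions. -/
def IsLocalTimeChain (m : ℝ) (μ : Measure (ℕ → ℕ)) : Prop :=
  ∀ (n : ℕ) (x : ℕ → ℕ),
    μ {ω | ∀ k ≤ n, ω k = x k} =
      (if x 0 = 1 then 1 else 0) *
        ∏ k ∈ Finset.range n, ENNReal.ofReal (ptrans m (x k) (x (k + 1)))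

/-- Path weight of length `n`. -/
noncomputable def wgt (m : ℝ) (n : ℕ) (x : ℕ → ℕ) : ℝ≥0∞ :=
  (if x 0 = 1 then 1 else 0) *
    ∏ k ∈ Finset.range n, ENNReal.ofReal (ptrans m (x k) (x (k + 1)))

/-- Extend a finite path to an infinite one by zeros. -/
def extf (n : ℕ) (x : Fin (n + 1) → ℕ) : ℕ → ℕ :=
  fun k => if h : k < n + 1 then x ⟨k, h⟩ else 0

lemma extf_of_le (n : ℕ) (x : Fin (n + 1) → ℕ) (k : ℕ) (hk : k ≤ n) :
    extf n x k = x ⟨k, by omega⟩ := by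
  simp [extf, Nat.lt_succ_of_le hk]

lemma cyl_measurable (n : ℕ) (y : ℕ → ℕ) :
    MeasurableSet {ω : ℕ → ℕ | ∀ k ≤ n, ω k = y k} := by
  have h : {ω : ℕ → ℕ | ∀ k ≤ n, ω k = y k} =
      ⋂ k : ℕ, {ω : ℕ → ℕ | k ≤ n → ω k = y k} := by
    ext ω; simp [Set.mem_iInter]
  rw [h]
  refine MeasurableSet.iInter fun k => ?_
  by_cases hk : k ≤ n
  · have : {ω : ℕ → ℕ | k ≤ n → ω k = y k} = (fun ω : ℕ → ℕ => ω k) ⁻¹' {y k} := by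
      ext ω; simp [hk]
    rw [this]
    exact measurable_pi_apply k (measurableSet_singleton _)
  · have : {ω : ℕ → ℕ | k ≤ n → ω k = y k} = Set.univ := by
      ext ω; simp [hk]
    rw [this]; exact MeasurableSet.univ

/-- Measure of an event defined by pointwise constraints on coordinates `0..n`:
sum of weights over admissible finite paths. -/
lemma meas_constraint (m : ℝ) (μ : Measure (ℕ → ℕ)) (hμ : IsLocalTimeChain m μ)
    (n : ℕ) (p : ℕ → ℕ → Prop) :
    μ {ω | ∀ k ≤ n, p k (ω k)} =
      ∑' x : Fin (n + 1) → ℕ,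
        Set.indicator {x : Fin (n + 1) → ℕ | ∀ k : Fin (n + 1), p (k : ℕ) (x k)}
          (fun x => wgt m n (extf n x)) x := by
  classical
  set T : (Fin (n + 1) → ℕ) → Set (ℕ → ℕ) := fun x =>
    if ∀ k : Fin (n + 1), p (k : ℕ) (x k) then {ω | ∀ k ≤ n, ω k = extf n x k} else ∅
    with hT
  have hSeq : {ω : ℕ → ℕ | ∀ k ≤ n, p k (ω k)} = ⋃ x, T x := by
    ext ω
    constructor
    · intro hω
      refine Set.mem_iUnion.2 ⟨fun k => ω k, ?_⟩
      have hc : ∀ k : Fin (n + 1), p (k : ℕ) (ω k) :=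
        fun k => hω k (Nat.lt_succ_iff.mp k.isLt)
      simp only [hT, if_pos hc]
      intro k hk
      rw [extf_of_le n _ k hk]
    · intro hω
      obtain ⟨x, hx⟩ := Set.mem_iUnion.1 hω
      by_cases hc : ∀ k : Fin (n + 1), p (k : ℕ) (x k)
      · simp only [hT, if_pos hc] at hx
        intro k hk
        have hxk := hx k hk
        rw [hxk, extf_of_le n x k hk]
        exact hc ⟨k, by omega⟩
      · simp only [hT, if_neg hc] at hx
        exact absurd hx (Set.notMem_empty ω)
  have hdisj : Pairwise (Function.onFun Disjoint T) := by
    intro x y hxy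
    simp only [Function.onFun, hT]
    by_cases hcx : ∀ k : Fin (n + 1), p (k : ℕ) (x k)
    · by_cases hcy : ∀ k : Fin (n + 1), p (k : ℕ) (y k)
      · rw [if_pos hcx, if_pos hcy]
        refine Set.disjoint_left.2 fun ω hx' hy' => hxy ?_
        funext k
        have h1 := hx' (k : ℕ) (Nat.lt_succ_iff.mp k.isLt)
        have h2 := hy' (k : ℕ) (Nat.lt_succ_iff.mp k.isLt)
        rw [extf_of_le n x (k : ℕ) (Nat.lt_succ_iff.mp k.isLt)] at h1
        rw [extf_of_le n y (k : ℕ) (Nat.lt_succ_iff.mp k.isLt)] at h2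
        have := h1.symm.trans h2
        simpa using this
      · rw [if_neg hcy]; exact disjoint_bot_right
    · rw [if_neg hcx]; exact disjoint_bot_left
  have hmeas : ∀ x, MeasurableSet (T x) := by
    intro x
    simp only [hT]
    by_cases hc : ∀ k : Fin (n + 1), p (k : ℕ) (x k)
    · rw [if_pos hc]; exact cyl_measurable n (extf n x)
    · rw [if_neg hc]; exact MeasurableSet.empty
  rw [hSeq, measure_iUnion hdisj hmeas]
  refine tsum_congr fun x => ?_
  by_cases hc : ∀ k : Fin (n + 1), p (k : ℕ) (x k)
  · have hmem : x ∈ {x : Fin (n + 1) → ℕ | ∀ k : Fin (n + 1), p (k : ℕ) (x k)} := hc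
    rw [Set.indicator_of_mem hmem]
    simp only [hT, if_pos hc]
    exact hμ n (extf n x)
  · have hmem : x ∉ {x : Fin (n + 1) → ℕ | ∀ k : Fin (n + 1), p (k : ℕ) (x k)} := hc
    rw [Set.indicator_of_notMem hmem]
    simp only [hT, if_neg hc]
    exact measure_empty
/-- Markov factorization bound: the probability of hitting `1` at time `t` and then
avoiding `1` for `b` steps is at most the probability of avoiding `1` on `[1,b]`
(started at `1`). -/
lemma measC_le (m : ℝ) (μ : Measure (ℕ → ℕ)) [IsProbabilityMeasure μ]
    (hμ : IsLocalTimeChain m μ) (t b : ℕ) :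
    μ {ω | ∀ k ≤ t + b, (k = t → ω k = 1) ∧ (t < k → ω k ≠ 1)} ≤
      μ {ω | ∀ k ≤ b, (k = 0 → ω k = 1) ∧ (1 ≤ k → ω k ≠ 1)} := by
  classical
  have h1 := meas_constraint m μ hμ (t + b)
    (fun k v => (k = t → v = 1) ∧ (t < k → v ≠ 1))
  have h2 := meas_constraint m μ hμ b
    (fun k v => (k = 0 → v = 1) ∧ (1 ≤ k → v ≠ 1))
  have h3 := meas_constraint m μ hμ t (fun k v => k = t → v = 1)
  set F : (Fin (t + b + 1) → ℕ) → ℝ≥0∞ := fun x =>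
    Set.indicator
      {x : Fin (t + b + 1) → ℕ |
        ∀ k : Fin (t + b + 1), ((k : ℕ) = t → x k = 1) ∧ (t < (k : ℕ) → x k ≠ 1)}
      (fun x => wgt m (t + b) (extf (t + b) x)) x with hF
  set Fp : (Fin (t + 1) → ℕ) → ℝ≥0∞ := fun u =>
    Set.indicator {u : Fin (t + 1) → ℕ | ∀ k : Fin (t + 1), ((k : ℕ) = t → u k = 1)}
      (fun u => wgt m t (extf t u)) u with hFp
  set Fs : (Fin (b + 1) → ℕ) → ℝ≥0∞ := fun v =>
    Set.indicator
      {v : Fin (b + 1) → ℕ |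
        ∀ k : Fin (b + 1), ((k : ℕ) = 0 → v k = 1) ∧ (1 ≤ (k : ℕ) → v k ≠ 1)}
      (fun v => wgt m b (extf b v)) v with hFs
  set g : (Fin (t + b + 1) → ℕ) → (Fin (t + 1) → ℕ) × (Fin (b + 1) → ℕ) := fun x =>
    (fun k => x ⟨(k : ℕ), by have := k.isLt; omega⟩,
     fun j => x ⟨t + (j : ℕ), by have := j.isLt; omega⟩) with hg
  have hginj : Function.Injective g := by
    intro x y hxy
    have e1 := congrFun (congrArg Prod.fst hxy)
    have e2 := congrFun (congrArg Prod.snd hxy)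
    funext k
    rcases le_or_gt (k : ℕ) t with hk | hk
    · have h := e1 ⟨(k : ℕ), by omega⟩
      simp only [hg] at h
      have ek : (⟨(k : ℕ), by have := k.isLt; omega⟩ : Fin (t + b + 1)) = k :=
        Fin.ext rfl
      rwa [ek] at h
    · have hkb : (k : ℕ) - t < b + 1 := by have := k.isLt; omega
      have h := e2 ⟨(k : ℕ) - t, hkb⟩
      simp only [hg] at h
      have ek : (⟨t + ((k : ℕ) - t), by have := hkb; omega⟩ : Fin (t + b + 1)) = k :=
        Fin.ext (by simp; omega)
      rwa [ek] at h
  have hFG : ∀ x, F x ≤ Fp (g x).1 * Fs (g x).2 := by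
    intro x
    by_cases hc : ∀ k : Fin (t + b + 1), ((k : ℕ) = t → x k = 1) ∧ (t < (k : ℕ) → x k ≠ 1)
    · -- equality in fact
      have hxt : x ⟨t, by omega⟩ = 1 := (hc ⟨t, by omega⟩).1 rfl
      have hcp : ∀ k : Fin (t + 1), ((k : ℕ) = t → (g x).1 k = 1) := by
        intro k hk
        simp only [hg]
        have : (⟨(k : ℕ), by have := k.isLt; omega⟩ : Fin (t + b + 1))
            = ⟨t, by omega⟩ := Fin.ext (by simpa using hk)
        rw [this]; exact hxt
      have hcs : ∀ k : Fin (b + 1),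
          ((k : ℕ) = 0 → (g x).2 k = 1) ∧ (1 ≤ (k : ℕ) → (g x).2 k ≠ 1) := by
        intro k
        constructor
        · intro hk
          simp only [hg]
          have : (⟨t + (k : ℕ), by have := k.isLt; omega⟩ : Fin (t + b + 1))
              = ⟨t, by omega⟩ := Fin.ext (by simp [hk])
          rw [this]; exact hxt
        · intro hk
          simp only [hg]
          exact (hc ⟨t + (k : ℕ), by have := k.isLt; omega⟩).2 (by show t < t + (k : ℕ); omega)
      have hmF : x ∈ {x : Fin (t + b + 1) → ℕ |
          ∀ k : Fin (t + b + 1), ((k : ℕ) = t → x k = 1) ∧ (t < (k : ℕ) → x k ≠ 1)} := hc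
      have hmP : (g x).1 ∈ {u : Fin (t + 1) → ℕ |
          ∀ k : Fin (t + 1), ((k : ℕ) = t → u k = 1)} := hcp
      have hmS : (g x).2 ∈ {v : Fin (b + 1) → ℕ |
          ∀ k : Fin (b + 1), ((k : ℕ) = 0 → v k = 1) ∧ (1 ≤ (k : ℕ) → v k ≠ 1)} := hcs
      simp only [hF, hFp, hFs]
      rw [Set.indicator_of_mem hmF, Set.indicator_of_mem hmP, Set.indicator_of_mem hmS]
      -- now an equality of weights
      have hz0 : extf t (g x).1 0 = extf (t + b) x 0 := by
        rw [extf_of_le t _ 0 (by omega), extf_of_le (t + b) x 0 (by omega)]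
      have hzpre : ∀ k, k < t →
          extf t (g x).1 k = extf (t + b) x k ∧
          extf t (g x).1 (k + 1) = extf (t + b) x (k + 1) := by
        intro k hk
        constructor
        · rw [extf_of_le t _ k (by omega), extf_of_le (t + b) x k (by omega)]
        · rw [extf_of_le t _ (k + 1) (by omega), extf_of_le (t + b) x (k + 1) (by omega)]
      have hzsuf : ∀ k, k < b →
          extf b (g x).2 k = extf (t + b) x (t + k) ∧
          extf b (g x).2 (k + 1) = extf (t + b) x (t + k + 1) := by
        intro k hk
        constructor
        · rw [extf_of_le b _ k (by omega), extf_of_le (t + b) x (t + k) (by omega)]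
        · rw [extf_of_le b _ (k + 1) (by omega),
            extf_of_le (t + b) x (t + k + 1) (by omega)]
          rfl
      have hs0 : extf b (g x).2 0 = 1 := by
        rw [extf_of_le b _ 0 (by omega)]
        simp only [hg]
        exact hxt
      rw [wgt, wgt, wgt]
      rw [Finset.prod_range_add]
      rw [hs0, if_pos rfl, one_mul, hz0]
      rw [mul_assoc]
      apply le_of_eq
      congr 1
      congr 1
      · exact Finset.prod_congr rfl fun k hk => by
          obtain ⟨ha, hb⟩ := hzpre k (Finset.mem_range.mp hk)
          rw [ha, hb]
      · exact Finset.prod_congr rfl fun k hk => by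
          obtain ⟨ha, hb⟩ := hzsuf k (Finset.mem_range.mp hk)
          rw [ha, hb]
    · have hmF : x ∉ {x : Fin (t + b + 1) → ℕ |
          ∀ k : Fin (t + b + 1), ((k : ℕ) = t → x k = 1) ∧ (t < (k : ℕ) → x k ≠ 1)} := hc
      simp only [hF]
      rw [Set.indicator_of_notMem hmF]
      exact zero_le
  calc μ {ω | ∀ k ≤ t + b, (k = t → ω k = 1) ∧ (t < k → ω k ≠ 1)}
      = ∑' x, F x := by simp only [hF]; exact h1
    _ ≤ ∑' p : (Fin (t + 1) → ℕ) × (Fin (b + 1) → ℕ), Fp p.1 * Fs p.2 := by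
        exact Summable.tsum_le_tsum_of_inj g hginj (fun _ _ => zero_le) hFG
          ENNReal.summable ENNReal.summable
    _ = (∑' u, Fp u) * (∑' v, Fs v) := by
        rw [ENNReal.tsum_prod (f := fun a b => Fp a * Fs b)]
        simp_rw [ENNReal.tsum_mul_left]
        rw [ENNReal.tsum_mul_right]
    _ ≤ 1 * μ {ω | ∀ k ≤ b, (k = 0 → ω k = 1) ∧ (1 ≤ k → ω k ≠ 1)} := by
        apply mul_le_mul'
        · simp only [hFp]; rw [← h3]; exact prob_le_one
        · simp only [hFs]; rw [← h2]
    _ = _ := one_mul _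
/-- For every integer `ℓ ≥ 2`, the probability that the chain avoids state
`1` on the whole time window `[⌈ℓ/2⌉, ℓ]` is bounded, via a union bound over the last
visit to `1` before time `ℓ/2`, by `⌈ℓ/2⌉ · P(γ > ⌊ℓ/2⌋)`, where
`{γ > k} = {N_n ≠ 1 for all 1 ≤ n ≤ k}`. -/
theorem avoid_one_window_bound (m : ℝ) (hm : 1 < m)
    (μ : Measure (ℕ → ℕ)) [IsProbabilityMeasure μ] (hμ : IsLocalTimeChain m μ)
    (ℓ : ℕ) (hℓ : 2 ≤ ℓ) :
    μ {ω | ∀ i : ℕ, (ℓ + 1) / 2 ≤ i → i ≤ ℓ → 2 ≤ ω i} ≤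
      (((ℓ + 1) / 2 : ℕ) : ℝ≥0∞) * μ {ω | ∀ n : ℕ, 1 ≤ n → n ≤ ℓ / 2 → ω n ≠ 1} := by
  classical
  set a := (ℓ + 1) / 2 with haa
  set b := ℓ / 2 with hbb
  have hab : a + b = ℓ := by omega
  have ha1 : 1 ≤ a := by omega
  -- the events "last visit to 1 at time t"
  set C : ℕ → Set (ℕ → ℕ) := fun t =>
    {ω | ∀ k ≤ t + b, (k = t → ω k = 1) ∧ (t < k → ω k ≠ 1)} with hC
  set Z : Set (ℕ → ℕ) := {ω | ∀ k ≤ 0, ω k ≠ 1} with hZdef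
  -- Z has measure zero
  have hZ : μ Z = 0 := by
    have h := meas_constraint m μ hμ 0 (fun _ v => v ≠ 1)
    rw [hZdef, h]
    refine ENNReal.tsum_eq_zero.mpr fun x => ?_
    by_cases hc : x ∈ {x : Fin 1 → ℕ | ∀ k : Fin 1, x k ≠ 1}
    · rw [Set.indicator_of_mem hc]
      have h0 : extf 0 x 0 = x ⟨0, by omega⟩ := extf_of_le 0 x 0 le_rfl
      have hne : extf 0 x 0 ≠ 1 := by rw [h0]; exact hc ⟨0, by omega⟩
      simp [wgt, hne]
    · rw [Set.indicator_of_notMem hc]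
  -- union bound decomposition
  have hsub : {ω : ℕ → ℕ | ∀ i : ℕ, a ≤ i → i ≤ ℓ → 2 ≤ ω i} ⊆
      (⋃ t : Fin a, C (t : ℕ)) ∪ Z := by
    intro ω hω
    by_cases h0 : ω 0 = 1
    · left
      set t := Nat.findGreatest (fun s => ω s = 1) (a - 1) with htdef
      have ht_le : t ≤ a - 1 := Nat.findGreatest_le _
      have ht1 : ω t = 1 := by
        rw [htdef]
        exact Nat.findGreatest_spec (P := fun s => ω s = 1) (Nat.zero_le _) h0
      refine Set.mem_iUnion.2 ⟨⟨t, by omega⟩, ?_⟩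
      intro k hk
      constructor
      · intro hkt; rw [hkt]; exact ht1
      · intro hlt hone
        rcases le_or_gt k (a - 1) with hka | hka
        · refine Nat.findGreatest_is_greatest (P := fun s => ω s = 1) ?_ hka hone
          rw [← htdef]; exact hlt
        · have h2k : 2 ≤ ω k := hω k (by omega) (by omega)
          omega
    · right
      intro k hk
      have : k = 0 := by omega
      rw [this]; exact h0
  calc μ {ω | ∀ i : ℕ, a ≤ i → i ≤ ℓ → 2 ≤ ω i}
      ≤ μ ((⋃ t : Fin a, C (t : ℕ)) ∪ Z) := measure_mono hsub
    _ ≤ μ (⋃ t : Fin a, C (t : ℕ)) + μ Z := measure_union_le _ _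
    _ = μ (⋃ t : Fin a, C (t : ℕ)) := by rw [hZ, add_zero]
    _ ≤ ∑' t : Fin a, μ (C (t : ℕ)) := measure_iUnion_le _
    _ ≤ ∑' _ : Fin a, μ {ω | ∀ n : ℕ, 1 ≤ n → n ≤ b → ω n ≠ 1} := by
        refine ENNReal.tsum_le_tsum fun t => ?_
        refine le_trans (measC_le m μ hμ (t : ℕ) b) (measure_mono ?_)
        intro ω hω n hn1 hnb
        exact (hω n hnb).2 hn1
    _ = (a : ℝ≥0∞) * μ {ω | ∀ n : ℕ, 1 ≤ n → n ≤ b → ω n ≠ 1} := by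
        rw [tsum_fintype, Finset.sum_const, Finset.card_univ, Fintype.card_fin,
          nsmul_eq_mul]
end

section
/- There exist constants c > 0 and C > 0 such that for every integer ℓ ≥ 1, P(N_i ≥ 2 for every integer i with ⌈ℓ/2⌉ ≤ i ≤ ℓ) ≤ C·exp(-c·ℓ). -/
open MeasureTheory
open scoped ENNReal Classical
open scoped Topology

lemma ptrans_nonneg {m : ℝ} (hm : 0 < m) (i j : ℕ) : 0 ≤ ptrans m i j := by
  unfold ptrans
  positivity

lemma ptrans_zero {m : ℝ} (i : ℕ) (hi : 1 ≤ i) : ptrans m i 0 = 0 := by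
  unfold ptrans
  rw [Nat.choose_eq_zero_of_lt (by omega)]
  simp

/-- Generating function of one step of the kernel. -/
lemma ptrans_tsum_mul {m : ℝ} (hm : 1 < m) {t : ℝ} (ht0 : 0 < t) (ht : t < m + 1)
    (i : ℕ) (hi : 1 ≤ i) :
    Summable (fun j => ptrans m i j * t ^ j) ∧
      ∑' j : ℕ, ptrans m i j * t ^ j = t * (m / (m + 1 - t)) ^ (i + 1) := by
  have hm1 : (0:ℝ) < m + 1 := by linarith
  have hu0 : 0 ≤ t / (m+1) := by positivity
  have hu : ‖t / (m+1)‖ < 1 := by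
    rw [Real.norm_eq_abs, abs_of_nonneg hu0, div_lt_one hm1]; linarith
  have key : ∀ n : ℕ, ptrans m i (n+1) * t ^ (n+1) =
      (t * m ^ (i+1) / (m+1) ^ (i+1)) * (((n + i).choose i : ℝ) * (t/(m+1)) ^ n) := by
    intro n
    unfold ptrans
    have : i + (n+1) - 1 = n + i := by omega
    rw [this]
    have h2 : i + (n+1) = (i+1) + n := by omega
    rw [h2, pow_add, div_pow, pow_add]
    field_simp
    ring
  have hs0 : Summable (fun n : ℕ => ((n + i).choose i : ℝ) * (t/(m+1)) ^ n) :=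
    summable_choose_mul_geometric_of_norm_lt_one i hu
  have hs1 : Summable (fun n : ℕ => ptrans m i (n+1) * t ^ (n+1)) := by
    simpa only [key] using hs0.mul_left (t * m ^ (i+1) / (m+1) ^ (i+1))
  have hsum : Summable (fun j : ℕ => ptrans m i j * t ^ j) := by
    rw [← summable_nat_add_iff 1]
    exact hs1
  refine ⟨hsum, ?_⟩
  rw [Summable.tsum_eq_zero_add hsum]
  rw [ptrans_zero i hi, zero_mul, zero_add]
  calc ∑' n : ℕ, ptrans m i (n+1) * t ^ (n+1)
      = (t * m ^ (i+1) / (m+1) ^ (i+1)) * ∑' n : ℕ, ((n + i).choose i : ℝ) * (t/(m+1)) ^ n := by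
        rw [← tsum_mul_left]; exact tsum_congr key
    _ = (t * m ^ (i+1) / (m+1) ^ (i+1)) * (1 / (1 - t/(m+1)) ^ (i + 1)) := by
        rw [tsum_choose_mul_geometric_of_norm_lt_one i hu]
    _ = t * (m / (m + 1 - t)) ^ (i + 1) := by
        have h1 : 1 - t/(m+1) = (m + 1 - t)/(m+1) := by field_simp
        rw [h1, div_pow, div_pow]
        have h2 : (0:ℝ) < m + 1 - t := by linarith
        field_simp

lemma exists_constants (m : ℝ) (hm : 1 < m) :
    ∃ θ lam : ℝ, 1 < θ ∧ θ < m ∧ 0 < lam ∧ lam < 1 ∧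
      (∀ i : ℕ, 2 ≤ i →
        θ * (m / (m + 1 - θ)) ^ (i + 1) ≤ lam * θ ^ i + θ * (m / (m + 1)) ^ (i + 1)) := by
  have hm0 : (0:ℝ) < m := by linarith
  -- choose k
  obtain ⟨k0, hk0⟩ := exists_nat_gt (3 / (m - 1))
  set k := k0 + 1 with hk
  have hk1 : 1 ≤ k := by omega
  have hkm : (k:ℝ) * (m - 1) > 3 := by
    have hk0' : (3 / (m-1)) < (k:ℝ) := by
      refine lt_of_lt_of_le hk0 ?_
      exact_mod_cast Nat.le_succ k0
    exact (div_lt_iff₀ (by linarith)).mp hk0'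
  have hD : (0:ℝ) < m ^ (k+1) * ((k:ℝ) * m - ((k:ℝ)+2)) := by
    apply mul_pos (by positivity)
    nlinarith [hkm]
  set q : ℝ := m / (m + 1) with hq
  have hq0 : 0 < q := by positivity
  have hq1 : q < 1 := by
    rw [hq, div_lt_one (by linarith)]; linarith
  -- the polynomial f
  set f : ℝ → ℝ := fun x => x ^ k * (m + 1 - x) ^ (k + 2) with hf
  have hderiv : HasDerivAt f ((k:ℝ) * m ^ (k+2) - ((k:ℝ)+2) * m ^ (k+1)) 1 := by
    have h1 : HasDerivAt (fun x : ℝ => x ^ k) ((k:ℝ) * 1 ^ (k-1)) 1 := hasDerivAt_pow k 1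
    have h2 : HasDerivAt (fun x : ℝ => m + 1 - x) (-1) 1 := by
      simpa using (hasDerivAt_id (1:ℝ)).const_sub (m+1)
    have h3 : HasDerivAt (fun x : ℝ => (m + 1 - x) ^ (k+2))
        (((k:ℝ)+2) * (m + 1 - 1) ^ (k+1) * (-1)) 1 := by
      have := h2.fun_pow (k+2)
      simpa using this
    have h4 : HasDerivAt (fun x : ℝ => x ^ k * (m + 1 - x) ^ (k + 2)) _ 1 := h1.fun_mul h3
    have e1 : m + 1 - 1 = m := by ring
    convert h4 using 1
    rw [e1]
    simp [one_pow]
    ring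
  have hD' : (0:ℝ) < (k:ℝ) * m ^ (k+2) - ((k:ℝ)+2) * m ^ (k+1) := by
    have : (k:ℝ) * m ^ (k+2) - ((k:ℝ)+2) * m ^ (k+1) = m ^ (k+1) * ((k:ℝ) * m - ((k:ℝ)+2)) := by
      rw [pow_succ]
      ring
    rw [this]; exact hD
  -- eventually statements on 𝓝[>] 1
  have Ev1 : ∀ᶠ x in 𝓝[>] (1:ℝ), 0 < slope f 1 x := by
    have := hasDerivAt_iff_tendsto_slope.mp hderiv
    have h5 : ∀ᶠ y in 𝓝 ((k:ℝ) * m ^ (k+2) - ((k:ℝ)+2) * m ^ (k+1)), 0 < y :=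
      eventually_gt_nhds hD'
    have h6 := this.eventually h5
    exact nhdsWithin_mono 1 (fun x hx => ne_of_gt hx) h6
  have Ev2 : ∀ᶠ x in 𝓝[>] (1:ℝ), x ∈ Set.Ioo 1 m :=
    Ioo_mem_nhdsGT_of_mem ⟨le_refl 1, hm⟩
  have Ev3 : ∀ᶠ x in 𝓝[>] (1:ℝ),
      x * ((m / (m + 1 - x)) ^ (k+2) - q ^ (k+2)) < 1 - q ^ (k+2) / 2 := by
    have hcont : ContinuousAt (fun x : ℝ => x * ((m / (m + 1 - x)) ^ (k+2) - q ^ (k+2))) 1 := by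
      apply ContinuousAt.mul continuousAt_id
      apply ContinuousAt.sub _ continuousAt_const
      apply ContinuousAt.pow
      apply ContinuousAt.div continuousAt_const
      · fun_prop
      · simp; intro h; linarith
    have hval : (fun x : ℝ => x * ((m / (m + 1 - x)) ^ (k+2) - q ^ (k+2))) 1
        = 1 - q ^ (k+2) := by
      simp only []
      have : m + 1 - 1 = m := by ring
      rw [this, div_self (ne_of_gt hm0)]
      simp
    have hlt : (1:ℝ) - q ^ (k+2) < 1 - q ^ (k+2)/2 := by
      have : 0 < q ^ (k+2) := by positivity
      linarith
    have h9 : (fun x : ℝ => x * ((m / (m + 1 - x)) ^ (k+2) - q ^ (k+2))) 1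
        < 1 - q ^ (k+2)/2 := by rw [hval]; exact hlt
    have h10 := hcont.tendsto.eventually (eventually_lt_nhds h9)
    exact nhdsWithin_le_nhds h10
  obtain ⟨θ, hs, ⟨hθ1, hθm⟩, hg⟩ := (Ev1.and (Ev2.and Ev3)).exists
  set r : ℝ := m / (m + 1 - θ) with hr
  have hmθ : 0 < m + 1 - θ := by linarith
  have hr1 : 1 ≤ r := by
    rw [hr, le_div_iff₀ hmθ]; linarith
  have hrθ : r ≤ θ := by
    rw [hr, div_le_iff₀ hmθ]
    nlinarith
  -- from slope positivity: f θ > f 1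
  have hfθ : m ^ (k+2) < f θ := by
    have h7 : 0 < (f θ - f 1) / (θ - 1) := by rw [← slope_def_field]; exact hs
    have h8 : 0 < f θ - f 1 := by
      by_contra h
      push_neg at h
      have : (f θ - f 1) / (θ - 1) ≤ 0 := div_nonpos_of_nonpos_of_nonneg h (by linarith)
      linarith
    have hf1 : f 1 = m ^ (k+2) := by simp [hf]
    linarith
  have hrk : r ^ (k+2) < θ ^ k := by
    rw [hr, div_pow, div_lt_iff₀ (by positivity)]
    calc m ^ (k+2) < f θ := hfθ
      _ = θ ^ k * (m + 1 - θ) ^ (k+2) := rfl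
  set lam1 : ℝ := r ^ (k+2) / θ ^ k with hlam1
  have hlam1pos : 0 < lam1 := by positivity
  have hlam1lt : lam1 < 1 := by
    rw [hlam1, div_lt_one (by positivity)]; exact hrk
  set lam : ℝ := max lam1 (1 - q ^ (k+2) / 2) with hlam
  refine ⟨θ, lam, hθ1, hθm, lt_of_lt_of_le hlam1pos (le_max_left _ _), ?_, ?_⟩
  · apply max_lt hlam1lt
    have : 0 < q ^ (k+2) := by positivity
    linarith
  intro i hi
  have hθ0 : (0:ℝ) < θ := by linarith
  rcases le_or_gt i (k+1) with hik | hik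
  · -- small i
    have h1 : r ^ (i+1) ≤ r ^ (k+2) := pow_le_pow_right₀ (by linarith) (by omega)
    have h2 : q ^ (k+2) ≤ q ^ (i+1) :=
      pow_le_pow_of_le_one (le_of_lt hq0) (le_of_lt hq1) (by omega)
    have h3 : θ * (r ^ (k+2) - q ^ (k+2)) < 1 - q ^ (k+2)/2 := hg
    have h4 : (1:ℝ) - q ^ (k+2)/2 ≤ lam := le_max_right _ _
    have h5 : (1:ℝ) ≤ θ ^ i := one_le_pow₀ (le_of_lt hθ1)
    have hlamp : 0 < lam := lt_of_lt_of_le hlam1pos (le_max_left lam1 (1 - q ^ (k+2) / 2))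
    have h6 : lam ≤ lam * θ ^ i := le_mul_of_one_le_right hlamp.le h5
    have hA : θ * r ^ (i+1) ≤ θ * r ^ (k+2) := mul_le_mul_of_nonneg_left h1 hθ0.le
    have hB : θ * q ^ (k+2) ≤ θ * q ^ (i+1) := mul_le_mul_of_nonneg_left h2 hθ0.le
    linarith
  · -- large i
    have hsplit : i + 1 = (k+2) + (i - k - 1) := by omega
    have h1 : r ^ (i - k - 1) ≤ θ ^ (i - k - 1) :=
      pow_le_pow_left₀ (by linarith) hrθ _
    have h2 : r ^ (i+1) ≤ lam1 * θ ^ (i - 1) := by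
      rw [hsplit, pow_add, hlam1]
      have e : θ ^ (i-1) = θ ^ k * θ ^ (i - k - 1) := by
        rw [← pow_add]
        congr 1
        omega
      rw [e]
      calc r ^ (k+2) * r ^ (i-k-1) ≤ r ^ (k+2) * θ ^ (i-k-1) := by
            apply mul_le_mul_of_nonneg_left h1 (by positivity)
        _ = r ^ (k+2) / θ ^ k * (θ ^ k * θ ^ (i-k-1)) := by
            field_simp
    have h3 : θ * r ^ (i+1) ≤ lam1 * θ ^ i := by
      calc θ * r ^ (i+1) ≤ θ * (lam1 * θ ^ (i-1)) := by
            apply mul_le_mul_of_nonneg_left h2 (le_of_lt hθ0)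
        _ = lam1 * (θ * θ ^ (i-1)) := by ring
        _ = lam1 * θ ^ i := by
            congr 1
            rw [← pow_succ']
            congr 1
            omega
    have h4 : lam1 * θ ^ i ≤ lam * θ ^ i := by
      apply mul_le_mul_of_nonneg_right (le_max_left _ _) (by positivity)
    have h5 : 0 ≤ θ * q ^ (i+1) := by positivity
    linarith

lemma exists_K (m θ : ℝ) (hm : 1 < m) (hθ1 : 1 < θ) (hθm : θ < m) :
    ∃ K : ℝ, 0 ≤ K ∧ ∀ i : ℕ,
      θ * (m / (m + 1 - θ)) ^ (i + 1) ≤ (1/2) * θ ^ i + K := by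
  set r : ℝ := m / (m + 1 - θ) with hr
  have hmθ : 0 < m + 1 - θ := by linarith
  have hθ0 : (0:ℝ) < θ := by linarith
  have hr0 : 0 < r := by positivity
  have hr1 : 1 ≤ r := by
    rw [hr, le_div_iff₀ hmθ]; linarith
  have hrθ : r < θ := by
    rw [hr, div_lt_iff₀ hmθ]; nlinarith
  have hq : r / θ < 1 := (div_lt_one hθ0).mpr hrθ
  have hq0 : 0 ≤ r / θ := by positivity
  obtain ⟨n1, hn1⟩ := exists_pow_lt_of_lt_one (show (0:ℝ) < 1/(2*θ*r) by positivity) hq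
  refine ⟨θ * r ^ (n1+1), by positivity, ?_⟩
  intro i
  rcases le_or_gt i n1 with hi | hi
  · have h1 : r ^ (i+1) ≤ r ^ (n1+1) := pow_le_pow_right₀ hr1 (by omega)
    have h2 : θ * r ^ (i+1) ≤ θ * r ^ (n1+1) := mul_le_mul_of_nonneg_left h1 hθ0.le
    have h3 : (0:ℝ) ≤ (1/2) * θ ^ i := by positivity
    linarith
  · have h1 : (r/θ) ^ i ≤ (r/θ) ^ n1 :=
      pow_le_pow_of_le_one hq0 hq.le (by omega)
    have h2 : θ * r ^ (i+1) = (θ * r) * ((r/θ) ^ i * θ ^ i) := by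
      have e : (r/θ) ^ i * θ ^ i = r ^ i := by
        rw [← mul_pow, div_mul_cancel₀ _ (ne_of_gt hθ0)]
      rw [e, pow_succ]
      ring
    have h4 : θ * r ^ (i+1) ≤ (θ * r) * ((1/(2*θ*r)) * θ ^ i) := by
      rw [h2]
      apply mul_le_mul_of_nonneg_left _ (by positivity)
      apply mul_le_mul_of_nonneg_right (le_of_lt (lt_of_le_of_lt h1 hn1)) (by positivity)
    have h5 : (θ * r) * ((1/(2*θ*r)) * θ ^ i) = (1/2) * θ ^ i := by
      field_simp
    have h6 : (0:ℝ) ≤ θ * r ^ (n1+1) := by positivity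
    linarith

noncomputable def Pk (m : ℝ) (i j : ℕ) : ℝ≥0∞ := ENNReal.ofReal (ptrans m i j)

noncomputable def chi (a k j : ℕ) : ℝ≥0∞ := if a ≤ k ∧ j < 2 then 0 else 1

lemma chi_le_one (a k j : ℕ) : chi a k j ≤ 1 := by
  unfold chi; split <;> simp

noncomputable def vv (m : ℝ) (a : ℕ) : ℕ → ℕ → ℝ≥0∞
  | 0 => fun j => if j = 1 then 1 else 0
  | n+1 => fun j => chi a (n+1) j * ∑' i, vv m a n i * Pk m i j

@[reducible] def PPath : ℕ → Type
  | 0 => ℕ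
  | n+1 => PPath n × ℕ

instance PPath.countable : ∀ n, Countable (PPath n)
  | 0 => inferInstanceAs (Countable ℕ)
  | n+1 =>
    haveI := PPath.countable n
    inferInstanceAs (Countable (PPath n × ℕ))

def lastc : ∀ n, PPath n → ℕ
  | 0 => fun i => i
  | _+1 => fun p => p.2

def coord : ∀ n, PPath n → ℕ → ℕ
  | 0 => fun i _ => i
  | n+1 => fun p k => if k = n+1 then p.2 else coord n p.1 k

noncomputable def wt (m : ℝ) (a : ℕ) : ∀ n, PPath n → ℝ≥0∞
  | 0 => fun i => if i = 1 then 1 else 0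
  | n+1 => fun p => wt m a n p.1 * (Pk m (lastc n p.1) p.2 * chi a (n+1) p.2)

lemma coord_last : ∀ n (p : PPath n), coord n p n = lastc n p
  | 0, p => rfl
  | n+1, p => by simp [coord, lastc]

lemma coord_le : ∀ n (p : PPath (n+1)) (k : ℕ), k ≤ n → coord (n+1) p k = coord n p.1 k := by
  intro n p k hk
  simp only [coord]
  rw [if_neg (by omega)]

/-- W1 : last-coordinate marginal of wt equals vv. -/
lemma wt_marginal (m : ℝ) (a : ℕ) :
    ∀ n j, ∑' p : PPath n, wt m a n p * (if lastc n p = j then 1 else 0) = vv m a n j := by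
  intro n
  induction n with
  | zero =>
    intro j
    show ∑' i : ℕ, (if i = 1 then (1:ℝ≥0∞) else 0) * (if i = j then 1 else 0) = _
    rw [tsum_eq_single j]
    · simp [vv]
    · intro i hi
      rw [if_neg hi, mul_zero]
  | succ n ih =>
    intro j
    show ∑' p : PPath n × ℕ,
        wt m a n p.1 * (Pk m (lastc n p.1) p.2 * chi a (n+1) p.2) *
          (if p.2 = j then 1 else 0) = _
    refine Eq.trans (ENNReal.tsum_prod
      (f := fun (z : PPath n) (t : ℕ) => wt m a n z * (Pk m (lastc n z) t * chi a (n+1) t) *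
        (if t = j then 1 else 0))) ?_
    have e1 : ∀ z : PPath n,
        ∑' t : ℕ, wt m a n z * (Pk m (lastc n z) t * chi a (n+1) t) *
          (if t = j then 1 else 0)
        = wt m a n z * Pk m (lastc n z) j * chi a (n+1) j := by
      intro z
      rw [tsum_eq_single j]
      · rw [if_pos rfl, mul_one]; ring
      · intro t ht; rw [if_neg ht, mul_zero]
    rw [tsum_congr e1]
    show _ = chi a (n+1) j * ∑' i, vv m a n i * Pk m i j
    have e2 : ∀ z : PPath n,
        wt m a n z * Pk m (lastc n z) j * chi a (n+1) j
        = ∑' i : ℕ, (wt m a n z * (if lastc n z = i then 1 else 0)) *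
            (Pk m i j * chi a (n+1) j) := by
      intro z
      rw [tsum_eq_single (lastc n z)]
      · rw [if_pos rfl, mul_one]; ring
      · intro i hi
        rw [if_neg (fun h => hi h.symm), mul_zero, zero_mul]
    rw [tsum_congr e2, ENNReal.tsum_comm]
    have e3 : ∀ b : ℕ,
        (∑' z : PPath n, (wt m a n z * if lastc n z = b then 1 else 0) *
          (Pk m b j * chi a (n+1) j))
        = chi a (n+1) j * (vv m a n b * Pk m b j) := by
      intro b
      rw [ENNReal.tsum_mul_right, ih b]
      ring
    rw [tsum_congr e3, ENNReal.tsum_mul_left]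


/-- W2 : product formula for wt. -/
lemma wt_prod_formula (m : ℝ) (a : ℕ) :
    ∀ n (p : PPath n),
      (if coord n p 0 = 1 then (1:ℝ≥0∞) else 0) *
        ∏ k ∈ Finset.range n,
          (Pk m (coord n p k) (coord n p (k+1)) * chi a (k+1) (coord n p (k+1)))
      = wt m a n p := by
  intro n
  induction n with
  | zero => intro p; simp [coord, wt]; exact if_congr Iff.rfl rfl rfl
  | succ n ih =>
    intro p
    rw [Finset.prod_range_succ]
    have h0 : coord (n+1) p 0 = coord n p.1 0 := coord_le n p 0 (by omega)
    have h1 : ∀ k ∈ Finset.range n,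
        Pk m (coord (n+1) p k) (coord (n+1) p (k+1)) * chi a (k+1) (coord (n+1) p (k+1))
        = Pk m (coord n p.1 k) (coord n p.1 (k+1)) * chi a (k+1) (coord n p.1 (k+1)) := by
      intro k hk
      simp only [Finset.mem_range] at hk
      rw [coord_le n p k (by omega), coord_le n p (k+1) (by omega)]
    rw [Finset.prod_congr rfl h1, h0]
    have h2 : coord (n+1) p n = lastc n p.1 := by
      rw [coord_le n p n (le_refl n), coord_last]
    have h3 : coord (n+1) p (n+1) = p.2 := by simp [coord]
    rw [h2, h3, ← mul_assoc, ih p.1]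
    rfl

def pathOf (ω : ℕ → ℕ) : ∀ n, PPath n
  | 0 => ω 0
  | n+1 => (pathOf ω n, ω (n+1))

lemma coord_pathOf (ω : ℕ → ℕ) : ∀ n k, k ≤ n → coord n (pathOf ω n) k = ω k := by
  intro n
  induction n with
  | zero => intro k hk; rw [Nat.le_zero.mp hk]; rfl
  | succ n ih =>
    intro k hk
    rcases Nat.lt_or_ge k (n+1) with h | h
    · rw [coord_le n (pathOf ω (n+1)) k (by omega)]
      exact ih k (by omega)
    · have : k = n+1 := by omega
      subst this
      simp [coord, pathOf]

lemma tsum_wt_eq (m : ℝ) (a n : ℕ) :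
    ∑' p : PPath n, wt m a n p = ∑' j : ℕ, vv m a n j := by
  have e : ∀ p : PPath n, wt m a n p =
      ∑' j : ℕ, wt m a n p * (if lastc n p = j then 1 else 0) := by
    intro p
    rw [tsum_eq_single (lastc n p)]
    · simp
    · intro j hj
      rw [if_neg (fun h => hj h.symm), mul_zero]
  rw [tsum_congr e, ENNReal.tsum_comm]
  exact tsum_congr (wt_marginal m a n)

lemma Pk_zero (m : ℝ) (i : ℕ) (hi : 1 ≤ i) : Pk m i 0 = 0 := by
  rw [Pk, ptrans_zero i hi, ENNReal.ofReal_zero]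

lemma Pk_one (m : ℝ) (hm : 1 < m) (i : ℕ) :
    Pk m i 1 = ENNReal.ofReal ((m/(m+1)) ^ (i+1)) := by
  rw [Pk]
  congr 1
  unfold ptrans
  rw [Nat.add_sub_cancel, Nat.choose_self]
  rw [div_pow]
  simp

lemma Pk_tsum (m t : ℝ) (hm : 1 < m) (ht1 : 1 ≤ t) (htm : t < m + 1)
    (i : ℕ) (hi : 1 ≤ i) :
    ∑' j : ℕ, Pk m i j * ENNReal.ofReal (t ^ j)
      = ENNReal.ofReal (t * (m / (m + 1 - t)) ^ (i + 1)) := by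
  have hm0 : (0:ℝ) < m := by linarith
  have ht0 : (0:ℝ) < t := by linarith
  obtain ⟨hsum, heq⟩ := ptrans_tsum_mul hm ht0 htm i hi
  calc ∑' j : ℕ, Pk m i j * ENNReal.ofReal (t ^ j)
      = ∑' j : ℕ, ENNReal.ofReal (ptrans m i j * t ^ j) := by
        refine tsum_congr fun j => ?_
        rw [Pk, ENNReal.ofReal_mul (ptrans_nonneg hm0 i j)]
    _ = ENNReal.ofReal (∑' j : ℕ, ptrans m i j * t ^ j) := by
        rw [ENNReal.ofReal_tsum_of_nonneg (fun j => mul_nonneg (ptrans_nonneg hm0 i j)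
          (by positivity)) hsum]
    _ = _ := by rw [heq]

lemma Pk_tsum_one (m : ℝ) (hm : 1 < m) (i : ℕ) (hi : 1 ≤ i) :
    ∑' j : ℕ, Pk m i j = 1 := by
  have h := Pk_tsum m 1 hm (le_refl 1) (by linarith) i hi
  simp only [one_pow, ENNReal.ofReal_one, mul_one] at h
  rw [h]
  have : m + 1 - 1 = m := by ring
  rw [this, div_self (by linarith : m ≠ 0)]
  simp

lemma vv_zero (m : ℝ) (a : ℕ) : ∀ n, vv m a n 0 = 0 := by
  intro n
  induction n with
  | zero => simp [vv]
  | succ n ih =>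
    show chi a (n+1) 0 * ∑' i, vv m a n i * Pk m i 0 = 0
    have : ∀ i : ℕ, vv m a n i * Pk m i 0 = 0 := by
      intro i
      rcases Nat.eq_zero_or_pos i with h | h
      · rw [h, ih, zero_mul]
      · rw [Pk_zero m i h, mul_zero]
    rw [tsum_congr this]
    simp

lemma vv_small (m : ℝ) (a : ℕ) (ha : 1 ≤ a) :
    ∀ n j, a ≤ n → j < 2 → vv m a n j = 0 := by
  intro n j han hj
  cases n with
  | zero => omega
  | succ n =>
    show chi a (n+1) j * _ = 0
    rw [chi, if_pos ⟨han, hj⟩, zero_mul]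

lemma vv_mass (m : ℝ) (a : ℕ) (hm : 1 < m) : ∀ n, ∑' i : ℕ, vv m a n i ≤ 1 := by
  intro n
  induction n with
  | zero =>
    rw [show (fun i => vv m a 0 i) = fun i : ℕ => if i = 1 then (1:ℝ≥0∞) else 0 from rfl]
    rw [tsum_eq_single 1 (fun i hi => if_neg hi)]
    simp
  | succ n ih =>
    calc ∑' j : ℕ, vv m a (n+1) j
        ≤ ∑' j : ℕ, ∑' i : ℕ, vv m a n i * Pk m i j := by
          refine ENNReal.tsum_le_tsum fun j => ?_
          show chi a (n+1) j * _ ≤ _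
          calc chi a (n+1) j * (∑' i, vv m a n i * Pk m i j)
              ≤ 1 * (∑' i, vv m a n i * Pk m i j) :=
                mul_le_mul_left (chi_le_one a (n+1) j) _
            _ = _ := one_mul _
      _ = ∑' i : ℕ, ∑' j : ℕ, vv m a n i * Pk m i j := ENNReal.tsum_comm
      _ = ∑' i : ℕ, vv m a n i * ∑' j : ℕ, Pk m i j := by
          exact tsum_congr fun i => ENNReal.tsum_mul_left
      _ ≤ ∑' i : ℕ, vv m a n i := by
          refine ENNReal.tsum_le_tsum fun i => ?_
          rcases Nat.eq_zero_or_pos i with h | h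
          · rw [h, vv_zero m a n, zero_mul]
          · rw [Pk_tsum_one m hm i h, mul_one]
      _ ≤ 1 := ih

noncomputable def Phi (m : ℝ) (a : ℕ) (t : ℝ) (n : ℕ) : ℝ≥0∞ :=
  ∑' i : ℕ, vv m a n i * ENNReal.ofReal (t ^ i)

lemma Phi_step_le (m θ : ℝ) (a : ℕ) (hm : 1 < m) (hθ1 : 1 ≤ θ) (hθm : θ < m + 1) (n : ℕ) :
    Phi m a θ (n+1) ≤ ∑' i : ℕ, vv m a n i *
      ENNReal.ofReal (θ * (m / (m + 1 - θ)) ^ (i + 1)) := by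
  calc Phi m a θ (n+1)
      ≤ ∑' j : ℕ, (∑' i : ℕ, vv m a n i * Pk m i j) * ENNReal.ofReal (θ ^ j) := by
        refine ENNReal.tsum_le_tsum fun j => ?_
        show chi a (n+1) j * _ * _ ≤ _
        exact mul_le_mul_left
          ((mul_le_mul_left (chi_le_one a (n+1) j) _).trans_eq (one_mul _)) _
    _ = ∑' j : ℕ, ∑' i : ℕ, vv m a n i * (Pk m i j * ENNReal.ofReal (θ ^ j)) := by
        refine tsum_congr fun j => ?_
        rw [← ENNReal.tsum_mul_right]
        exact tsum_congr fun i => by ring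
    _ = ∑' i : ℕ, vv m a n i * ∑' j : ℕ, Pk m i j * ENNReal.ofReal (θ ^ j) := by
        rw [ENNReal.tsum_comm]
        exact tsum_congr fun i => ENNReal.tsum_mul_left
    _ ≤ _ := by
        refine ENNReal.tsum_le_tsum fun i => ?_
        rcases Nat.eq_zero_or_pos i with h | h
        · rw [h, vv_zero m a n, zero_mul, zero_mul]
        · rw [Pk_tsum m θ hm hθ1 hθm i h]

lemma Phi_bounded (m θ K : ℝ) (a : ℕ) (hm : 1 < m) (hθ1 : 1 ≤ θ) (hθm : θ < m + 1)
    (hK0 : 0 ≤ K)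
    (hK : ∀ i : ℕ, θ * (m / (m + 1 - θ)) ^ (i + 1) ≤ (1/2) * θ ^ i + K) :
    ∀ n, Phi m a θ n ≤ ENNReal.ofReal (θ + 2 * K) := by
  intro n
  have hθ0 : (0:ℝ) < θ := by linarith
  induction n with
  | zero =>
    show (∑' i : ℕ, (if i = 1 then (1:ℝ≥0∞) else 0) * ENNReal.ofReal (θ ^ i)) ≤ _
    rw [tsum_eq_single 1 (fun i hi => by rw [if_neg hi, zero_mul])]
    rw [if_pos rfl, one_mul, pow_one]
    exact ENNReal.ofReal_le_ofReal (by linarith)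
  | succ n ih =>
    calc Phi m a θ (n+1)
        ≤ ∑' i : ℕ, vv m a n i * ENNReal.ofReal (θ * (m / (m + 1 - θ)) ^ (i + 1)) :=
          Phi_step_le m θ a hm hθ1 hθm n
      _ ≤ ∑' i : ℕ, vv m a n i *
            (ENNReal.ofReal (1/2) * ENNReal.ofReal (θ ^ i) + ENNReal.ofReal K) := by
          refine ENNReal.tsum_le_tsum fun i => mul_le_mul_right ?_ _
          rw [← ENNReal.ofReal_mul (by norm_num), ← ENNReal.ofReal_add (by positivity) hK0]
          exact ENNReal.ofReal_le_ofReal (hK i)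
      _ = ∑' i : ℕ, (ENNReal.ofReal (1/2) * (vv m a n i * ENNReal.ofReal (θ ^ i))
            + ENNReal.ofReal K * vv m a n i) := tsum_congr fun i => by ring
      _ = ENNReal.ofReal (1/2) * Phi m a θ n + ENNReal.ofReal K * ∑' i : ℕ, vv m a n i := by
          rw [ENNReal.tsum_add, ENNReal.tsum_mul_left, ENNReal.tsum_mul_left, Phi]
      _ ≤ ENNReal.ofReal (1/2) * ENNReal.ofReal (θ + 2*K) + ENNReal.ofReal K * 1 := by
          exact add_le_add (mul_le_mul_right ih _)
            (mul_le_mul_right (vv_mass m a hm n) _)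
      _ ≤ ENNReal.ofReal (θ + 2 * K) := by
          rw [mul_one, ← ENNReal.ofReal_mul (by norm_num), ← ENNReal.ofReal_add (by positivity) hK0]
          exact ENNReal.ofReal_le_ofReal (by linarith)

lemma Phi_contract (m θ lam : ℝ) (a : ℕ) (hm : 1 < m) (hθ1 : 1 < θ) (hθm : θ < m)
    (hlam0 : 0 ≤ lam)
    (hlam : ∀ i : ℕ, 2 ≤ i →
      θ * (m / (m + 1 - θ)) ^ (i + 1) ≤ lam * θ ^ i + θ * (m / (m + 1)) ^ (i + 1))
    (ha : 1 ≤ a) (n : ℕ) (han : a ≤ n) :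
    Phi m a θ (n+1) ≤ ENNReal.ofReal lam * Phi m a θ n := by
  have hθ0 : (0:ℝ) < θ := by linarith
  have hθm1 : θ < m + 1 := by linarith
  -- rewrite Phi (n+1) as  ∑' i, vv n i * T i
  have step1 : Phi m a θ (n+1) = ∑' i : ℕ, vv m a n i *
      ∑' j : ℕ, chi a (n+1) j * (Pk m i j * ENNReal.ofReal (θ ^ j)) := by
    calc Phi m a θ (n+1)
        = ∑' j : ℕ, ∑' i : ℕ, vv m a n i *
            (chi a (n+1) j * (Pk m i j * ENNReal.ofReal (θ ^ j))) := by
          refine tsum_congr fun j => ?_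
          show chi a (n+1) j * (∑' i, vv m a n i * Pk m i j) * ENNReal.ofReal (θ ^ j) = _
          rw [mul_comm (chi a (n+1) j) _, mul_assoc, ← ENNReal.tsum_mul_right]
          exact tsum_congr fun i => by ring
      _ = _ := by
          rw [ENNReal.tsum_comm]
          exact tsum_congr fun i => ENNReal.tsum_mul_left
  rw [step1]
  have step2 : ∀ i : ℕ, vv m a n i *
      (∑' j : ℕ, chi a (n+1) j * (Pk m i j * ENNReal.ofReal (θ ^ j)))
      ≤ vv m a n i * (ENNReal.ofReal lam * ENNReal.ofReal (θ ^ i)) := by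
    intro i
    rcases Nat.lt_or_ge i 2 with hi | hi
    · rw [vv_small m a ha n i han hi, zero_mul, zero_mul]
    · refine mul_le_mul_right ?_ _
      have hi1 : 1 ≤ i := by omega
      -- splitting the full sum
      have hsplit : (∑' j : ℕ, Pk m i j * ENNReal.ofReal (θ ^ j))
          = (∑' j : ℕ, chi a (n+1) j * (Pk m i j * ENNReal.ofReal (θ ^ j)))
            + ENNReal.ofReal ((m/(m+1)) ^ (i+1) * θ) := by
        have e : ∀ j : ℕ, Pk m i j * ENNReal.ofReal (θ ^ j)
            = chi a (n+1) j * (Pk m i j * ENNReal.ofReal (θ ^ j))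
              + (if j < 2 then Pk m i j * ENNReal.ofReal (θ ^ j) else 0) := by
          intro j
          rcases Nat.lt_or_ge j 2 with hj | hj
          · rw [chi, if_pos ⟨by omega, hj⟩, if_pos hj, zero_mul, zero_add]
          · rw [chi, if_neg (by omega), if_neg (by omega), one_mul, add_zero]
        rw [tsum_congr e, ENNReal.tsum_add]
        congr 1
        rw [tsum_eq_sum (s := {0, 1})
          (by intro j hj; simp at hj; rw [if_neg (by omega)])]
        rw [Finset.sum_insert (by simp), Finset.sum_singleton]
        rw [if_pos (by omega), if_pos (by omega)]
        rw [Pk_zero m i hi1, zero_mul, zero_add, Pk_one m hm i, pow_one,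
          ← ENNReal.ofReal_mul (by positivity)]
      have htot : (∑' j : ℕ, Pk m i j * ENNReal.ofReal (θ ^ j))
          = ENNReal.ofReal (θ * (m / (m + 1 - θ)) ^ (i + 1)) :=
        Pk_tsum m θ hm hθ1.le hθm1 i hi1
      have hineq : ENNReal.ofReal (θ * (m / (m + 1 - θ)) ^ (i + 1))
          ≤ ENNReal.ofReal (lam * θ ^ i) + ENNReal.ofReal ((m/(m+1)) ^ (i+1) * θ) := by
        rw [← ENNReal.ofReal_add (by positivity) (by positivity)]
        refine ENNReal.ofReal_le_ofReal ?_
        have := hlam i hi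
        linarith
      have hle : (∑' j : ℕ, chi a (n+1) j * (Pk m i j * ENNReal.ofReal (θ ^ j)))
            + ENNReal.ofReal ((m/(m+1)) ^ (i+1) * θ)
          ≤ ENNReal.ofReal (lam * θ ^ i) + ENNReal.ofReal ((m/(m+1)) ^ (i+1) * θ) := by
        rw [← hsplit, htot]
        exact hineq
      have hfin : ENNReal.ofReal ((m/(m+1)) ^ (i+1) * θ) ≠ ⊤ := ENNReal.ofReal_ne_top
      have := (ENNReal.add_le_add_iff_right hfin).mp hle
      rwa [ENNReal.ofReal_mul hlam0] at this
  calc ∑' i : ℕ, vv m a n i *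
      ∑' j : ℕ, chi a (n+1) j * (Pk m i j * ENNReal.ofReal (θ ^ j))
      ≤ ∑' i : ℕ, vv m a n i * (ENNReal.ofReal lam * ENNReal.ofReal (θ ^ i)) :=
        ENNReal.tsum_le_tsum step2
    _ = ∑' i : ℕ, ENNReal.ofReal lam * (vv m a n i * ENNReal.ofReal (θ ^ i)) :=
        tsum_congr fun i => by ring
    _ = ENNReal.ofReal lam * Phi m a θ n := by rw [ENNReal.tsum_mul_left, Phi]

lemma Phi_final (m θ lam K : ℝ) (a : ℕ) (hm : 1 < m) (hθ1 : 1 < θ) (hθm : θ < m)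
    (hlam0 : 0 ≤ lam)
    (hlam : ∀ i : ℕ, 2 ≤ i →
      θ * (m / (m + 1 - θ)) ^ (i + 1) ≤ lam * θ ^ i + θ * (m / (m + 1)) ^ (i + 1))
    (hK0 : 0 ≤ K)
    (hK : ∀ i : ℕ, θ * (m / (m + 1 - θ)) ^ (i + 1) ≤ (1/2) * θ ^ i + K)
    (ha : 1 ≤ a) :
    ∀ d : ℕ, Phi m a θ (a + d) ≤ ENNReal.ofReal lam ^ d * ENNReal.ofReal (θ + 2*K) := by
  intro d
  induction d with
  | zero =>
    simpa using Phi_bounded m θ K a hm hθ1.le (by linarith) hK0 hK (a + 0)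
  | succ d ih =>
    have h1 : a + (d+1) = (a + d) + 1 := by omega
    rw [h1]
    calc Phi m a θ ((a+d)+1) ≤ ENNReal.ofReal lam * Phi m a θ (a+d) :=
          Phi_contract m θ lam a hm hθ1 hθm hlam0 hlam ha (a+d) (by omega)
      _ ≤ ENNReal.ofReal lam * (ENNReal.ofReal lam ^ d * ENNReal.ofReal (θ + 2*K)) :=
          mul_le_mul_right ih _
      _ = ENNReal.ofReal lam ^ (d+1) * ENNReal.ofReal (θ + 2*K) := by
          rw [pow_succ]
          ring

/-- There are constants `c > 0` and `C > 0` such that for every integer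
`ℓ ≥ 1`, `P(N_i ≥ 2 for every integer i with ⌈ℓ/2⌉ ≤ i ≤ ℓ) ≤ C·exp(-c·ℓ)`. -/
theorem avoid_one_window_exponential_bound (m : ℝ) (hm : 1 < m)
    (μ : Measure (ℕ → ℕ)) [IsProbabilityMeasure μ] (hμ : IsLocalTimeChain m μ) :
    ∃ c C : ℝ, 0 < c ∧ 0 < C ∧ ∀ ℓ : ℕ, 1 ≤ ℓ →
      μ {ω | ∀ i : ℕ, (ℓ + 1) / 2 ≤ i → i ≤ ℓ → 2 ≤ ω i} ≤
        ENNReal.ofReal (C * Real.exp (-c * ℓ)) := by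
  obtain ⟨θ, lam, hθ1, hθm, hlam0, hlam1, hlam⟩ := exists_constants m hm
  obtain ⟨K, hK0, hK⟩ := exists_K m θ hm hθ1 hθm
  have hloglam : Real.log lam < 0 := Real.log_neg hlam0 hlam1
  set c : ℝ := -(Real.log lam) / 2 with hc
  have hc0 : 0 < c := by rw [hc]; linarith
  set C : ℝ := (θ + 2*K) * Real.exp c with hC
  have hC0 : 0 < C := by
    apply mul_pos (by linarith) (Real.exp_pos c)
  refine ⟨c, C, hc0, hC0, ?_⟩
  intro ℓ hℓ
  set a : ℕ := (ℓ + 1) / 2 with hadef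
  have ha1 : 1 ≤ a := by omega
  have haℓ : a ≤ ℓ := by omega
  set d : ℕ := ℓ - a with hd
  have hd2 : 2 * d + 1 ≥ ℓ := by omega
  -- the covering family
  set CC : PPath ℓ → Set (ℕ → ℕ) := fun p =>
    if (∀ i : ℕ, a ≤ i → i ≤ ℓ → 2 ≤ coord ℓ p i) then
      {ω | ∀ k ≤ ℓ, ω k = coord ℓ p k} else ∅ with hCC
  have hcover : {ω : ℕ → ℕ | ∀ i : ℕ, a ≤ i → i ≤ ℓ → 2 ≤ ω i} ⊆ ⋃ p : PPath ℓ, CC p := by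
    intro ω hω
    refine Set.mem_iUnion.mpr ⟨pathOf ω ℓ, ?_⟩
    rw [hCC]
    simp only []
    rw [if_pos (fun i hi1 hi2 => by rw [coord_pathOf ω ℓ i hi2]; exact hω i hi1 hi2)]
    exact fun k hk => (coord_pathOf ω ℓ k hk).symm
  have hwt : ∀ p : PPath ℓ, μ (CC p) ≤ wt m a ℓ p := by
    intro p
    rw [hCC]
    simp only []
    split
    case isTrue hadm =>
      rw [hμ ℓ (coord ℓ p), ← wt_prod_formula m a ℓ p]
      refine mul_le_mul_right ?_ _
      refine Finset.prod_le_prod' fun k hk => ?_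
      simp only [Finset.mem_range] at hk
      have hchi : chi a (k+1) (coord ℓ p (k+1)) = 1 := by
        rw [chi, if_neg]
        rintro ⟨h1, h2⟩
        exact absurd (hadm (k+1) h1 (by omega)) (by omega)
      rw [hchi, mul_one]
      exact le_refl _
    case isFalse => simp
  have hμE : μ {ω : ℕ → ℕ | ∀ i : ℕ, a ≤ i → i ≤ ℓ → 2 ≤ ω i}
      ≤ ENNReal.ofReal lam ^ d * ENNReal.ofReal (θ + 2*K) := by
    calc μ {ω : ℕ → ℕ | ∀ i : ℕ, a ≤ i → i ≤ ℓ → 2 ≤ ω i}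
        ≤ μ (⋃ p : PPath ℓ, CC p) := measure_mono hcover
      _ ≤ ∑' p : PPath ℓ, μ (CC p) := measure_iUnion_le _
      _ ≤ ∑' p : PPath ℓ, wt m a ℓ p := ENNReal.tsum_le_tsum hwt
      _ = ∑' j : ℕ, vv m a ℓ j := tsum_wt_eq m a ℓ
      _ ≤ Phi m a θ ℓ := by
          refine ENNReal.tsum_le_tsum fun j => ?_
          calc vv m a ℓ j = vv m a ℓ j * 1 := (mul_one _).symm
            _ ≤ vv m a ℓ j * ENNReal.ofReal (θ ^ j) := by
                refine mul_le_mul_right ?_ _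
                rw [ENNReal.one_le_ofReal]
                exact one_le_pow₀ hθ1.le
      _ ≤ ENNReal.ofReal lam ^ d * ENNReal.ofReal (θ + 2*K) := by
          have : ℓ = a + d := by omega
          rw [this]
          exact Phi_final m θ lam K a hm hθ1 hθm hlam0.le hlam hK0 hK ha1 d
  refine hμE.trans ?_
  rw [← ENNReal.ofReal_pow hlam0.le, ← ENNReal.ofReal_mul (by positivity)]
  refine ENNReal.ofReal_le_ofReal ?_
  have hexp : lam ^ d = Real.exp ((d:ℝ) * Real.log lam) := by
    rw [← Real.log_pow, Real.exp_log (by positivity)]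
  have hdge : ((ℓ:ℝ) - 1) / 2 ≤ (d:ℝ) := by
    have : (ℓ:ℝ) ≤ 2 * (d:ℝ) + 1 := by exact_mod_cast hd2
    linarith
  have hmono : (d:ℝ) * Real.log lam ≤ (((ℓ:ℝ) - 1) / 2) * Real.log lam := by
    exact mul_le_mul_of_nonpos_right hdge hloglam.le
  have heq : (((ℓ:ℝ) - 1) / 2) * Real.log lam = c + (-c * ℓ) := by
    rw [hc]; ring
  calc lam ^ d * (θ + 2*K)
      ≤ Real.exp (c + (-c * ℓ)) * (θ + 2*K) := by
        rw [hexp]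
        refine mul_le_mul_of_nonneg_right ?_ (by linarith)
        rw [← heq]
        exact Real.exp_le_exp.mpr hmono
    _ = C * Real.exp (-c * ℓ) := by
        rw [hC, Real.exp_add]
        ring
end
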